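/- Let X be a positive semidefinite (2n+1)×(2n+1) matrix feasible for the bidual SDP (i.e., trace(A_j X) = y_j for j=1,…,m, trace(E₀X) = 1, trace(E_i X) = 0 and trace(C_i X) = 0 for i=1,…,n, with the structured matrices Q, A_j, E_i, C_i defined in the paper), and let w ∈ W₀ (first n+1 coordinates zero, last n coordinates in ker A). Then X + wwᵀ is also positive semidefinite, feasible for the same constraints, and trace(Q(X + wwᵀ)) = trace(QX). -/

import Mathlib

/-- Index type for ℝ^{2n+1}, split into blocks (z₀, z, x). -/
abbrev Idx (n : ℕ) := Fin 1 ⊕ (Fin n ⊕ Fin n)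

/-- The objective matrix Q: (z₀,z)-block ½eᵀ, symmetric, zeros elsewhere. -/
noncomputable def Qmat (n : ℕ) : Matrix (Idx n) (Idx n) ℝ := fun p q =>
  match p, q with
  | Sum.inl _, Sum.inr (Sum.inl _) => 1 / 2
  | Sum.inr (Sum.inl _), Sum.inl _ => 1 / 2
  | _, _ => 0

/-- The constraint matrix A_j: (z₀,x)-block ½a_jᵀ, symmetric. -/
noncomputable def Amat {m n : ℕ} (A : Matrix (Fin m) (Fin n) ℝ) (j : Fin m) :
    Matrix (Idx n) (Idx n) ℝ := fun p q =>
  match p, q with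
  | Sum.inl _, Sum.inr (Sum.inr i) => A j i / 2
  | Sum.inr (Sum.inr i), Sum.inl _ => A j i / 2
  | _, _ => 0

/-- E₀ = diag(1,0,…,0). -/
noncomputable def E0mat (n : ℕ) : Matrix (Idx n) (Idx n) ℝ := fun p q =>
  match p, q with
  | Sum.inl _, Sum.inl _ => 1
  | _, _ => 0

/-- E_i: (z₀,z)-entries −e_i (symmetric) and z-block 2·diag(e_i). -/
noncomputable def Emat (n : ℕ) (i : Fin n) : Matrix (Idx n) (Idx n) ℝ := fun p q =>
  match p, q with
  | Sum.inl _, Sum.inr (Sum.inl j) => if j = i then -1 else 0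
  | Sum.inr (Sum.inl j), Sum.inl _ => if j = i then -1 else 0
  | Sum.inr (Sum.inl j), Sum.inr (Sum.inl j') => if j = i ∧ j' = i then 2 else 0
  | _, _ => 0

/-- C_i: (z,x)-block diag(e_i), symmetric. -/
noncomputable def Cmat (n : ℕ) (i : Fin n) : Matrix (Idx n) (Idx n) ℝ := fun p q =>
  match p, q with
  | Sum.inr (Sum.inl j), Sum.inr (Sum.inr j') => if j = i ∧ j' = i then 1 else 0
  | Sum.inr (Sum.inr j), Sum.inr (Sum.inl j') => if j = i ∧ j' = i then 1 else 0
  | _, _ => 0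

/-- Feasibility for the bidual SDP (8). -/
def BidualFeasible {m n : ℕ} (A : Matrix (Fin m) (Fin n) ℝ) (y : Fin m → ℝ)
    (X : Matrix (Idx n) (Idx n) ℝ) : Prop :=
  X.PosSemidef ∧ (∀ j, (Amat A j * X).trace = y j) ∧ (E0mat n * X).trace = 1 ∧
    ∀ i, (Emat n i * X).trace = 0 ∧ (Cmat n i * X).trace = 0

/-- Optimality for the bidual SDP (8). -/
def BidualOptimal {m n : ℕ} (A : Matrix (Fin m) (Fin n) ℝ) (y : Fin m → ℝ)
    (X : Matrix (Idx n) (Idx n) ℝ) : Prop :=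
  BidualFeasible A y X ∧
    ∀ Y, BidualFeasible A y Y → (Qmat n * Y).trace ≤ (Qmat n * X).trace

/-- Membership in W₀: the z₀ and z coordinates vanish and the x coordinates
lie in ker A. -/
def memW0 {m n : ℕ} (A : Matrix (Fin m) (Fin n) ℝ) (w : Idx n → ℝ) : Prop :=
  w (Sum.inl 0) = 0 ∧ (∀ i : Fin n, w (Sum.inr (Sum.inl i)) = 0) ∧
    A.mulVec (fun j => w (Sum.inr (Sum.inr j))) = 0

theorem stmt_16 (m n : ℕ) (A : Matrix (Fin m) (Fin n) ℝ) (y : Fin m → ℝ)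
    (X : Matrix (Idx n) (Idx n) ℝ) (hX : BidualFeasible A y X)
    (w : Idx n → ℝ) (hw : memW0 A w) :
    BidualFeasible A y (X + Matrix.vecMulVec w w) ∧
      (Qmat n * (X + Matrix.vecMulVec w w)).trace = (Qmat n * X).trace := by
  obtain ⟨hw0, hwz, hwk⟩ := hw
  obtain ⟨hpsd, hA, hE0, hEC⟩ := hX
  have hpsd' : (Matrix.vecMulVec w w).PosSemidef := by
    rw [Matrix.posSemidef_iff_dotProduct_mulVec]
    constructor
    · ext i j
      simp [Matrix.vecMulVec, Matrix.conjTranspose_apply, mul_comm]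
    · intro x
      have : (Matrix.vecMulVec w w).mulVec x = (dotProduct w x) • w := by
        ext i
        simp only [Matrix.mulVec, Matrix.vecMulVec, dotProduct, Pi.smul_apply,
          Matrix.of_apply, smul_eq_mul, Finset.sum_mul, mul_assoc]
        exact Finset.sum_congr rfl fun j _ => by ring
      rw [this]
      simp only [dotProduct_smul, smul_eq_mul]
      have : dotProduct (star x) w = dotProduct w x := by
        simp [dotProduct, mul_comm]
      rw [this]
      exact mul_self_nonneg _
  have key : ∀ M : Matrix (Idx n) (Idx n) ℝ,
      (M * (X + Matrix.vecMulVec w w)).trace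
        = (M * X).trace + ∑ i, ∑ j, M i j * (w j * w i) := by
    intro M
    rw [mul_add, Matrix.trace_add]
    congr 1
  have hAker : ∀ j : Fin m, ∑ i, A j i * w (Sum.inr (Sum.inr i)) = 0 := by
    intro j
    have := congrFun hwk j
    simpa [Matrix.mulVec, dotProduct] using this
  refine ⟨⟨hpsd.add hpsd', ?_, ?_, ?_⟩, ?_⟩
  · intro j
    rw [key]
    simp [Amat, Fintype.sum_sum_type, hw0, hwz, hA]
  · rw [key]
    simp [E0mat, Fintype.sum_sum_type, hw0, hE0]
  · intro i
    constructor
    · rw [key]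
      simp [Emat, Fintype.sum_sum_type, hw0, hwz, (hEC i).1]
    · rw [key]
      simp [Cmat, Fintype.sum_sum_type, hwz, (hEC i).2]
  · rw [key]
    simp [Qmat, Fintype.sum_sum_type, hw0, hwz]
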